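/- For every positive integer n: Γ(n+1, n) > n!/2, i.e. ∫_n^∞ t^n e^{−t} dt > (1/2)·∫_0^∞ t^n e^{−t} dt. Equivalently, the ratio Γ(n+1, 0)/Γ(n+1, n) is strictly less than 2. -/

import Mathlib

open Real Set MeasureTheory

lemma aux_exp_stmt13 {x : ℝ} (hx : 0 ≤ x) :
    (1 - x) * Real.exp x ≤ (1 + x) * Real.exp (-x) := by
  set g : ℝ → ℝ := fun t => (1 + t) * Real.exp (-t) - (1 - t) * Real.exp t with hg
  have hderiv : ∀ y : ℝ, HasDerivAt g (y * (Real.exp y - Real.exp (-y))) y := by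
    intro y
    have h1 : HasDerivAt (fun t : ℝ => (1 + t) * Real.exp (-t))
        (1 * Real.exp (-y) + (1 + y) * (Real.exp (-y) * (-1))) y :=
      ((hasDerivAt_id y).const_add 1).mul
        ((Real.hasDerivAt_exp (-y)).comp y ((hasDerivAt_id y).neg))
    have h2 : HasDerivAt (fun t : ℝ => (1 - t) * Real.exp t)
        ((-1) * Real.exp y + (1 - y) * Real.exp y) y :=
      ((hasDerivAt_id y).const_sub 1).mul (Real.hasDerivAt_exp y)
    have := h1.sub h2
    refine this.congr_deriv ?_
    ring
  have hmono : MonotoneOn g (Set.Ici (0 : ℝ)) := by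
    apply monotoneOn_of_deriv_nonneg (convex_Ici 0)
      (fun y _ => (hderiv y).differentiableAt.continuousAt.continuousWithinAt)
      (fun y _ => (hderiv y).differentiableAt.differentiableWithinAt)
    intro y hy
    rw [interior_Ici] at hy
    rw [(hderiv y).deriv]
    have : Real.exp (-y) ≤ Real.exp y := Real.exp_le_exp.2 (by linarith [hy.out.le])
    have := hy.out.le
    nlinarith
  have h0 : g 0 ≤ g x := hmono (Set.self_mem_Ici) hx hx
  simp only [hg] at h0
  norm_num at h0
  linarith

lemma aux_pt_stmt13 (n : ℕ) (hn : 1 ≤ n) {u : ℝ} (h0 : 0 ≤ u) (h1 : u ≤ (n : ℝ)) :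
    ((n : ℝ) - u) ^ n * Real.exp (-((n : ℝ) - u)) ≤
      ((n : ℝ) + u) ^ n * Real.exp (-((n : ℝ) + u)) := by
  have hnpos : (0 : ℝ) < n := by exact_mod_cast hn
  set x : ℝ := u / n with hx
  have hx0 : 0 ≤ x := div_nonneg h0 hnpos.le
  have hx1 : x ≤ 1 := (div_le_one hnpos).2 h1
  have hux : (n : ℝ) * x = u := by rw [hx]; field_simp
  have hL : 0 ≤ (1 - x) * Real.exp x :=
    mul_nonneg (by linarith) (Real.exp_pos _).le
  have h : ((1 - x) * Real.exp x) ^ n ≤ ((1 + x) * Real.exp (-x)) ^ n :=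
    pow_le_pow_left₀ hL (aux_exp_stmt13 hx0) n
  have e1 : ((n : ℝ) - u) ^ n * Real.exp (-((n : ℝ) - u)) =
      (n : ℝ) ^ n * Real.exp (-(n : ℝ)) * ((1 - x) * Real.exp x) ^ n := by
    have hd : (n : ℝ) - u = (n : ℝ) * (1 - x) := by rw [mul_sub, mul_one, hux]
    rw [hd, mul_pow, mul_pow, ← Real.exp_nat_mul, hux,
      show -((n : ℝ) * (1 - x)) = -(n : ℝ) + u by rw [mul_sub, mul_one, hux]; ring,
      Real.exp_add]
    ring
  have e2 : ((n : ℝ) + u) ^ n * Real.exp (-((n : ℝ) + u)) =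
      (n : ℝ) ^ n * Real.exp (-(n : ℝ)) * ((1 + x) * Real.exp (-x)) ^ n := by
    have hd : (n : ℝ) + u = (n : ℝ) * (1 + x) := by rw [mul_add, mul_one, hux]
    rw [hd, mul_pow, mul_pow, ← Real.exp_nat_mul, mul_neg, hux,
      show -((n : ℝ) * (1 + x)) = -(n : ℝ) + -u by rw [mul_add, mul_one, hux]; ring,
      Real.exp_add]
    ring
  rw [e1, e2]
  exact mul_le_mul_of_nonneg_left h
    (mul_nonneg (pow_nonneg hnpos.le n) (Real.exp_pos _).le)

/-- for every positive integer `n`, `Γ(n+1, n) > n!/2`, i.e.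
`∫_n^∞ t^n e^{-t} dt > (1/2) ∫_0^∞ t^n e^{-t} dt = n!/2`; equivalently the ratio
`Γ(n+1, 0) / Γ(n+1, n)` is strictly less than `2`. -/
theorem stmt_13 (n : ℕ) (hn : 1 ≤ n) :
    (n.factorial : ℝ) / 2 < (∫ t in Set.Ioi (n : ℝ), t ^ n * Real.exp (-t)) ∧
      (∫ t in Set.Ioi (0 : ℝ), t ^ n * Real.exp (-t)) /
          (∫ t in Set.Ioi (n : ℝ), t ^ n * Real.exp (-t)) < 2 := by
  set f : ℝ → ℝ := fun t => t ^ n * Real.exp (-t) with hf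
  have hn0 : (0 : ℝ) ≤ n := Nat.cast_nonneg n
  have hnpos : (0 : ℝ) < n := by exact_mod_cast hn
  have hcont : Continuous f := by fun_prop
  have hInt : IntegrableOn f (Ioi (0 : ℝ)) := by
    have h := Real.GammaIntegral_convergent (show (0 : ℝ) < n + 1 by positivity)
    apply h.congr_fun ?_ measurableSet_Ioi
    intro x hx
    dsimp only [hf]
    rw [show ((n : ℝ) + 1 - 1) = (n : ℝ) by ring, Real.rpow_natCast]
    ring
  have htotal : (∫ t in Ioi (0 : ℝ), f t) = n.factorial := by
    have h1 : Real.Gamma ((n : ℝ) + 1) = n.factorial := by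
      exact_mod_cast Real.Gamma_nat_eq_factorial n
    rw [Real.Gamma_eq_integral (show (0 : ℝ) < (n : ℝ) + 1 by positivity)] at h1
    rw [← h1]
    apply setIntegral_congr_fun measurableSet_Ioi
    intro x hx
    dsimp only [hf]
    rw [show ((n : ℝ) + 1 - 1) = (n : ℝ) by ring, Real.rpow_natCast]
    ring
  have hIntn : IntegrableOn f (Ioi (n : ℝ)) := hInt.mono_set (Ioi_subset_Ioi hn0)
  have hsplit : (∫ t in Ioi (0 : ℝ), f t) =
      (∫ t in Ioc (0 : ℝ) n, f t) + ∫ t in Ioi (n : ℝ), f t := by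
    rw [← setIntegral_union (Ioc_disjoint_Ioi le_rfl) measurableSet_Ioi
      (hInt.mono_set Ioc_subset_Ioi_self) hIntn, Ioc_union_Ioi_eq_Ioi hn0]
  have hA : (∫ t in Ioc (0 : ℝ) n, f t) = ∫ u in (0 : ℝ)..n, f ((n : ℝ) - u) := by
    rw [intervalIntegral.integral_comp_sub_left f (n : ℝ)]
    norm_num
    rw [intervalIntegral.integral_of_le hn0]
  have hBeq : (∫ u in (0 : ℝ)..n, f ((n : ℝ) + u)) = ∫ t in Ioc (n : ℝ) (n + n), f t := by
    rw [intervalIntegral.integral_comp_add_left f (n : ℝ)]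
    norm_num
    rw [intervalIntegral.integral_of_le (by linarith)]
  have hstrict : (∫ u in (0 : ℝ)..n, f ((n : ℝ) - u)) <
      ∫ u in (0 : ℝ)..n, f ((n : ℝ) + u) := by
    apply intervalIntegral.integral_lt_integral_of_continuousOn_of_le_of_exists_lt hnpos
      ((hcont.comp (continuous_const.sub continuous_id)).continuousOn)
      ((hcont.comp (continuous_const.add continuous_id)).continuousOn)
    · intro u hu
      exact aux_pt_stmt13 n hn hu.1.le hu.2
    · refine ⟨(n : ℝ), ⟨hn0, le_refl _⟩, ?_⟩
      simp only [Function.comp_apply, Pi.sub_apply, Pi.add_apply, id_eq, hf, sub_self,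
        zero_pow (by omega : n ≠ 0), zero_mul]
      positivity
  have htail : 0 ≤ ∫ t in Ioi ((n : ℝ) + n), f t := by
    apply setIntegral_nonneg measurableSet_Ioi
    intro x hx
    have hx0 : 0 ≤ x := le_of_lt (lt_of_le_of_lt (by positivity) hx.out)
    have : f x = x ^ n * Real.exp (-x) := rfl
    rw [this]
    positivity
  have hsplit2 : (∫ t in Ioi (n : ℝ), f t) =
      (∫ t in Ioc (n : ℝ) (n + n), f t) + ∫ t in Ioi ((n : ℝ) + n), f t := by
    rw [← setIntegral_union (Ioc_disjoint_Ioi le_rfl) measurableSet_Ioi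
      (hIntn.mono_set Ioc_subset_Ioi_self) (hInt.mono_set (Ioi_subset_Ioi (by linarith))),
      Ioc_union_Ioi_eq_Ioi (by linarith : (n : ℝ) ≤ n + n)]
  have hAB : (∫ t in Ioc (0 : ℝ) n, f t) < ∫ t in Ioi (n : ℝ), f t := by
    rw [hA]
    calc (∫ u in (0 : ℝ)..n, f ((n : ℝ) - u))
        < ∫ u in (0 : ℝ)..n, f ((n : ℝ) + u) := hstrict
      _ = ∫ t in Ioc (n : ℝ) (n + n), f t := hBeq
      _ ≤ ∫ t in Ioi (n : ℝ), f t := by rw [hsplit2]; linarith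
  have hfac : (0 : ℝ) < n.factorial := by exact_mod_cast n.factorial_pos
  have h1 : (n.factorial : ℝ) / 2 < ∫ t in Ioi (n : ℝ), f t := by
    have h2 := htotal
    rw [hsplit] at h2
    linarith
  refine ⟨h1, ?_⟩
  have hBpos : 0 < ∫ t in Ioi (n : ℝ), f t := by linarith
  rw [htotal, div_lt_iff₀ hBpos]
  linarith
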